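/- Equivalence of width dimensions up to oscillation: let (X,d) be a compact metric space, φ: X → ℝ continuous, and ε > 0. Then Widim'_ε(X,d,φ) ≤ Widim_ε(X,d,φ) ≤ Widim'_ε(X,d,φ) + var_ε(φ,d), where var_ε(φ,d) = sup{|φ(x)−φ(y)| : d(x,y) ≤ ε}. -/

import Mathlib

open scoped Classical

/-- An abstract finite simplicial complex: a downward-closed family of nonempty finite
subsets (faces) of a finite vertex set. -/
structure FinSC where
  V : Type
  [fin : Fintype V]
  faces : Finset (Finset V)
  nonempty_mem : ∀ F ∈ faces, F.Nonempty
  down_closed : ∀ F ∈ faces, ∀ G ⊆ F, G.Nonempty → G ∈ faces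

attribute [instance] FinSC.fin

/-- The support of a point of the geometric realization: its set of nonzero
barycentric coordinates. -/
noncomputable def FinSC.supp (K : FinSC) (w : K.V → ℝ) : Finset K.V :=
  Finset.univ.filter (fun v => w v ≠ 0)

/-- Membership in the geometric realization `|K|`. -/
def FinSC.IsPoint (K : FinSC) (w : K.V → ℝ) : Prop :=
  (∀ v, 0 ≤ w v) ∧ (∑ v, w v = 1) ∧ K.supp w ∈ K.faces

/-- The geometric realization of `K`, topologized as a subspace of `K.V → ℝ`. -/
def FinSC.Sp (K : FinSC) : Type := {w : K.V → ℝ // K.IsPoint w}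

instance (K : FinSC) : TopologicalSpace K.Sp :=
  inferInstanceAs (TopologicalSpace {w : K.V → ℝ // K.IsPoint w})

/-- The local dimension `dim_a K`: the maximum dimension of a simplex of `K`
containing `a`. -/
noncomputable def FinSC.locDim (K : FinSC) (a : K.Sp) : ℕ :=
  ((K.faces.filter (fun F => K.supp a.1 ⊆ F)).sup Finset.card) - 1

/-- The small local dimension `dim'_a K`: the minimum dimension of a simplex of `K`
containing `a`, i.e. the dimension of the support simplex of `a`. -/
noncomputable def FinSC.slocDim (K : FinSC) (a : K.Sp) : ℕ :=
  (K.supp a.1).card - 1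

/-- `Widim_ε(X, d, φ)`: infimum over simplicial complexes `K` and `ε`-embeddings
`f : X → |K|` of `max_x (dim_{f(x)} K + φ(x))`. -/
noncomputable def widim {X : Type*} [MetricSpace X] (φ : X → ℝ) (ε : ℝ) : ℝ :=
  sInf {r : ℝ | ∃ (K : FinSC) (f : X → K.Sp), Continuous f ∧
    (∀ y : K.Sp, Metric.diam (f ⁻¹' {y}) < ε) ∧
    r = ⨆ x : X, ((K.locDim (f x) : ℝ) + φ x)}

/-- `Widim'_ε(X, d, φ)`: the same with the small local dimension. -/
noncomputable def widim' {X : Type*} [MetricSpace X] (φ : X → ℝ) (ε : ℝ) : ℝ :=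
  sInf {r : ℝ | ∃ (K : FinSC) (f : X → K.Sp), Continuous f ∧
    (∀ y : K.Sp, Metric.diam (f ⁻¹' {y}) < ε) ∧
    r = ⨆ x : X, ((K.slocDim (f x) : ℝ) + φ x)}

/-- The oscillation `var_ε(φ,d) = sup {|φ(x)−φ(y)| : d(x,y) ≤ ε}`. -/
noncomputable def varOsc {X : Type*} [MetricSpace X] (φ : X → ℝ) (ε : ℝ) : ℝ :=
  sSup {r : ℝ | ∃ x y : X, dist x y ≤ ε ∧ r = |φ x - φ y|}

namespace WidimAux

lemma supp_mem_faces (K : FinSC) (a : K.Sp) : K.supp a.1 ∈ K.faces := a.2.2.2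

lemma supp_nonempty (K : FinSC) (a : K.Sp) : (K.supp a.1).Nonempty :=
  K.nonempty_mem _ (supp_mem_faces K a)

lemma sloc_le_loc (K : FinSC) (a : K.Sp) : K.slocDim a ≤ K.locDim a := by
  apply Nat.sub_le_sub_right
  exact Finset.le_sup (f := Finset.card)
    (Finset.mem_filter.2 ⟨supp_mem_faces K a, subset_rfl⟩)

lemma loc_le_card (K : FinSC) (a : K.Sp) : K.locDim a ≤ Fintype.card K.V := by
  apply le_trans (Nat.sub_le _ _)
  exact Finset.sup_le fun F _ => F.card_le_univ

lemma sloc_le_card (K : FinSC) (a : K.Sp) : K.slocDim a ≤ Fintype.card K.V :=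
  le_trans (Nat.sub_le _ _) (Finset.card_le_univ _)

section Tf

variable {V : Type} [Fintype V] (e : V ≃ Fin (Fintype.card V)) (N : ℕ)

/-- Scaled cumulative sums of the coordinates of `a`, in the order given by `e`. -/
noncomputable def tf (a : V → ℝ) (i : ℕ) : ℝ :=
  (N : ℝ) * ∑ v ∈ Finset.univ.filter (fun v => ((e v : ℕ) < i)), a v

lemma tf_cont (i : ℕ) : Continuous (fun a : V → ℝ => tf e N a i) := by
  unfold tf
  exact continuous_const.mul (continuous_finset_sum _ fun v _ => continuous_apply v)

lemma tf_zero (a : V → ℝ) : tf e N a 0 = 0 := by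
  unfold tf
  rw [Finset.filter_false_of_mem (fun v _ => by omega)]
  simp

lemma tf_top (a : V → ℝ) (hsum : ∑ v, a v = 1) : tf e N a (Fintype.card V) = N := by
  unfold tf
  rw [Finset.filter_true_of_mem (fun v _ => (e v).is_lt)]
  rw [hsum, mul_one]

lemma tf_mono (a : V → ℝ) (ha : ∀ v, 0 ≤ a v) {i i' : ℕ} (h : i ≤ i') :
    tf e N a i ≤ tf e N a i' := by
  unfold tf
  apply mul_le_mul_of_nonneg_left _ (by positivity)
  apply Finset.sum_le_sum_of_subset_of_nonneg
  · intro v hv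
    simp only [Finset.mem_filter, Finset.mem_univ, true_and] at hv ⊢
    omega
  · exact fun v _ _ => ha v

lemma tf_step (a : V → ℝ) {i : ℕ} (h : i < Fintype.card V) :
    tf e N a (i + 1) = tf e N a i + (N : ℝ) * a (e.symm ⟨i, h⟩) := by
  unfold tf
  rw [← mul_add]
  congr 1
  have hsplit : Finset.univ.filter (fun v => ((e v : ℕ) < i + 1))
      = Finset.univ.filter (fun v => ((e v : ℕ) < i))
        ∪ Finset.univ.filter (fun v => ((e v : ℕ) = i)) := by
    rw [← Finset.filter_or]
    apply Finset.filter_congr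
    intro v _
    constructor
    · intro hv; omega
    · intro hv; omega
  have hsingle : Finset.univ.filter (fun v => ((e v : ℕ) = i)) = {e.symm ⟨i, h⟩} := by
    ext v
    simp only [Finset.mem_filter, Finset.mem_univ, true_and, Finset.mem_singleton]
    constructor
    · intro hv
      have : e v = ⟨i, h⟩ := Fin.ext hv
      rw [← this]; simp
    · intro hv; rw [hv]; simp
  have hdisj : Disjoint (Finset.univ.filter (fun v => ((e v : ℕ) < i)))
      (Finset.univ.filter (fun v => ((e v : ℕ) = i))) := by
    rw [Finset.disjoint_filter]
    intro v _ hv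
    omega
  rw [hsplit, Finset.sum_union hdisj, hsingle, Finset.sum_singleton]

end Tf

lemma card_image_lt {α β : Type*} {B : Finset α} {f : α → β} {x y : α}
    (hx : x ∈ B) (hy : y ∈ B) (hxy : x ≠ y) (hf : f x = f y) :
    (B.image f).card < B.card := by
  have himg : B.image f = (B.erase x).image f := by
    apply subset_antisymm
    · intro z hz
      obtain ⟨b, hb, rfl⟩ := Finset.mem_image.1 hz
      by_cases hbx : b = x
      · subst hbx
        rw [hf]
        exact Finset.mem_image_of_mem f (Finset.mem_erase.2 ⟨fun h => hxy h.symm, hy⟩)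
      · exact Finset.mem_image_of_mem f (Finset.mem_erase.2 ⟨hbx, hb⟩)
    · exact Finset.image_subset_image (Finset.erase_subset _ _)
  rw [himg]
  exact lt_of_le_of_lt Finset.card_image_le (Finset.card_erase_lt_of_mem hx)

/-- The key cover: an open cover of the realization of `K` (as a subset of `K.V → ℝ`)
with mesh `≤ δ` whose order at a point is at most the cardinality of its support. -/
theorem cover (K : FinSC) (hV : Nonempty K.V) (δ : ℝ) (hδ : 0 < δ) :
    ∃ (n N : ℕ) (O : (Fin (n+1) → Fin (N+1)) → Set (K.V → ℝ)),
      (∀ j, IsOpen (O j)) ∧ (∀ j, ((O j)ᶜ).Nonempty) ∧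
      (∀ j, ∀ a b : K.Sp, a.1 ∈ O j → b.1 ∈ O j → dist a.1 b.1 ≤ δ) ∧
      (∀ a : K.Sp, ∃ j, a.1 ∈ O j) ∧
      (∀ a : K.Sp,
        (Finset.univ.filter (fun j => a.1 ∈ O j)).card ≤ (K.supp a.1).card) := by
  set n := Fintype.card K.V with hn
  have hn1 : 1 ≤ n := Fintype.card_pos
  set e := Fintype.equivFin K.V with he
  set N : ℕ := max 1 ⌈4 / δ⌉₊ with hN
  have hN1 : 1 ≤ N := le_max_left _ _
  have hNpos : (0:ℝ) < N := by exact_mod_cast hN1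
  have hNδ : 4 / (N:ℝ) ≤ δ := by
    rw [div_le_iff₀ hNpos]
    have h1 : 4 / δ ≤ (⌈4/δ⌉₊ : ℝ) := Nat.le_ceil _
    have h2 : ((⌈4/δ⌉₊ : ℕ) : ℝ) ≤ (N : ℝ) := by exact_mod_cast le_max_right 1 ⌈4/δ⌉₊
    have := le_trans h1 h2
    rw [div_le_iff₀ hδ] at this
    linarith
  -- the cover sets
  set O : (Fin (n+1) → Fin (N+1)) → Set (K.V → ℝ) := fun q =>
    {w | (∀ i : Fin (n+1), tf e N w i - ((q i : ℕ) : ℝ) < 1) ∧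
         (∀ i : Fin (n+1), (-1 : ℝ) < tf e N w i - ((q i : ℕ) : ℝ)) ∧
         (∀ i i' : Fin (n+1),
           tf e N w i - ((q i : ℕ) : ℝ) < tf e N w i' - ((q i' : ℕ) : ℝ) + 1)} with hO
  refine ⟨n, N, O, ?_, ?_, ?_, ?_, ?_⟩
  · -- openness
    intro q
    have : O q = (⋂ i : Fin (n+1), {w : K.V → ℝ | tf e N w i - ((q i : ℕ) : ℝ) < 1}) ∩
        ((⋂ i : Fin (n+1), {w : K.V → ℝ | (-1:ℝ) < tf e N w i - ((q i : ℕ) : ℝ)}) ∩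
         (⋂ i : Fin (n+1), ⋂ i' : Fin (n+1),
           {w : K.V → ℝ | tf e N w i - ((q i : ℕ) : ℝ)
              < tf e N w i' - ((q i' : ℕ) : ℝ) + 1})) := by
      ext w
      simp [hO, Set.mem_iInter, Set.mem_setOf_eq]
    rw [this]
    refine IsOpen.inter ?_ (IsOpen.inter ?_ ?_)
    · exact isOpen_iInter_of_finite fun i =>
        isOpen_lt ((tf_cont e N i).sub continuous_const) continuous_const
    · exact isOpen_iInter_of_finite fun i =>
        isOpen_lt continuous_const ((tf_cont e N i).sub continuous_const)
    · exact isOpen_iInter_of_finite fun i => isOpen_iInter_of_finite fun i' =>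
        isOpen_lt ((tf_cont e N (i:ℕ)).sub continuous_const)
          (((tf_cont e N (i':ℕ)).sub continuous_const).add continuous_const)
  · -- complements nonempty
    intro q
    refine ⟨fun _ => (N + 1 : ℝ), fun hmem => ?_⟩
    have hA := hmem.1 (Fin.last n)
    have hcompute : tf e N (fun _ => (N + 1 : ℝ)) ((Fin.last n : Fin (n+1)) : ℕ)
        = (N : ℝ) * (n * (N + 1)) := by
      show tf e N (fun _ => (N + 1 : ℝ)) n = _
      unfold tf
      rw [Finset.filter_true_of_mem (fun v _ => (e v).is_lt)]
      rw [Finset.sum_const, Finset.card_univ]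
      rw [← hn]
      simp only [nsmul_eq_mul]
    rw [hcompute] at hA
    have hq : ((q (Fin.last n) : ℕ) : ℝ) ≤ N := by
      have := (q (Fin.last n)).is_le
      exact_mod_cast this
    have hn1' : (1:ℝ) ≤ n := by exact_mod_cast hn1
    have hN1' : (1:ℝ) ≤ N := by exact_mod_cast hN1
    have hbig : (N:ℝ) * (n * (N + 1)) ≥ (N:ℝ) + 1 := by
      have h1 : (0:ℝ) ≤ (N:ℝ) + 1 := by linarith
      have h2 : ((n:ℝ) - 1) * ((N:ℝ) * ((N:ℝ) + 1)) ≥ 0 := by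
        apply mul_nonneg (by linarith)
        apply mul_nonneg (by linarith) h1
      have h3 : ((N:ℝ) - 1) * ((N:ℝ) + 1) ≥ 0 := mul_nonneg (by linarith) h1
      nlinarith
    linarith
  · -- small diameter
    intro q a b ha hb
    have key : ∀ w : K.V → ℝ, w ∈ O q → ∀ i : Fin (n+1),
        ((q i : ℕ) : ℝ) - 1 < tf e N w i ∧ tf e N w i < ((q i : ℕ) : ℝ) + 1 := by
      intro w hw i
      have h1 := hw.1 i
      have h2 := hw.2.1 i
      constructor <;> linarith
    rw [dist_pi_le_iff hδ.le]
    intro v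
    have hv : ((e v : ℕ)) < n := (e v).is_lt
    have hstepa := tf_step e N a.1 hv
    have hstepb := tf_step e N b.1 hv
    have hee : e.symm ⟨(e v : ℕ), hv⟩ = v := by
      simp
    rw [hee] at hstepa hstepb
    have hia := key a.1 ha ⟨(e v : ℕ), by omega⟩
    have hib := key b.1 hb ⟨(e v : ℕ), by omega⟩
    have hia' := key a.1 ha ⟨(e v : ℕ) + 1, by omega⟩
    have hib' := key b.1 hb ⟨(e v : ℕ) + 1, by omega⟩
    simp only [Fin.val_mk] at hia hib hia' hib'
    have hNa : (N:ℝ) * a.1 v - (N:ℝ) * b.1 v < 4 := by linarith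
    have hNb : (N:ℝ) * b.1 v - (N:ℝ) * a.1 v < 4 := by linarith
    have h4 : |(N:ℝ) * (a.1 v - b.1 v)| ≤ 4 := by
      rw [abs_le, mul_sub]
      constructor <;> linarith
    have habs : |a.1 v - b.1 v| ≤ 4 / N := by
      rw [le_div_iff₀ hNpos]
      calc |a.1 v - b.1 v| * N = |(N:ℝ) * (a.1 v - b.1 v)| := by
            rw [abs_mul, abs_of_pos hNpos]; ring
      _ ≤ 4 := h4
    rw [Real.dist_eq]
    exact le_trans habs hNδ
  · -- covering
    intro a
    have hceilmem : ∀ i : Fin (n+1), (⌈tf e N a.1 (i:ℕ)⌉).toNat < N + 1 := by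
      intro i
      have hle : tf e N a.1 (i:ℕ) ≤ N := by
        calc tf e N a.1 (i:ℕ) ≤ tf e N a.1 n := tf_mono e N a.1 a.2.1 (by omega)
        _ = N := tf_top e N a.1 a.2.2.1
      have : ⌈tf e N a.1 (i:ℕ)⌉ ≤ (N:ℤ) := Int.ceil_le.2 (by exact_mod_cast hle)
      omega
    refine ⟨fun i => ⟨(⌈tf e N a.1 (i:ℕ)⌉).toNat, hceilmem i⟩, ?_⟩
    have hQ : ∀ i : Fin (n+1),
        (((⌈tf e N a.1 (i:ℕ)⌉).toNat : ℕ) : ℝ) = ((⌈tf e N a.1 (i:ℕ)⌉ : ℤ) : ℝ) := by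
      intro i
      have h0 : (0:ℝ) ≤ tf e N a.1 (i:ℕ) := by
        have := tf_mono e N a.1 a.2.1 (Nat.zero_le (i:ℕ))
        rwa [tf_zero] at this
      have : (0:ℤ) ≤ ⌈tf e N a.1 (i:ℕ)⌉ := Int.ceil_nonneg h0
      exact_mod_cast congrArg (fun z : ℤ => (z : ℝ)) (Int.toNat_of_nonneg this)
    refine ⟨?_, ?_, ?_⟩
    · intro i
      rw [hQ i]
      have := Int.le_ceil (tf e N a.1 (i:ℕ))
      linarith
    · intro i
      rw [hQ i]
      have := Int.ceil_lt_add_one (tf e N a.1 (i:ℕ))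
      linarith
    · intro i i'
      rw [hQ i, hQ i']
      have h1 := Int.le_ceil (tf e N a.1 (i:ℕ))
      have h2 := Int.ceil_lt_add_one (tf e N a.1 (i':ℕ))
      linarith
  · -- order
    intro a
    set t : ℕ → ℝ := fun i => tf e N a.1 i with ht
    set G := Finset.univ.filter (fun q : Fin (n+1) → Fin (N+1) => a.1 ∈ O q) with hG
    set Θ : (Fin (n+1) → Fin (N+1)) → ℝ := fun q =>
      (insert (0:ℝ) (Finset.image (fun i : Fin (n+1) => t (i:ℕ) - ((q i : ℕ) : ℝ))
        Finset.univ)).max' ⟨0, Finset.mem_insert_self _ _⟩ with hΘ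
    set T := Finset.image (fun i : Fin (n+1) => Int.fract (t (i:ℕ))) Finset.univ with hT
    have hΘ0 : ∀ q, 0 ≤ Θ q := fun q =>
      Finset.le_max' _ _ (Finset.mem_insert_self _ _)
    have hΘi : ∀ q, ∀ i : Fin (n+1), t (i:ℕ) - ((q i : ℕ) : ℝ) ≤ Θ q := by
      intro q i
      apply Finset.le_max'
      exact Finset.mem_insert_of_mem (Finset.mem_image_of_mem _ (Finset.mem_univ i))
    have hΘmem : ∀ q, Θ q = 0 ∨
        ∃ i : Fin (n+1), Θ q = t (i:ℕ) - ((q i : ℕ) : ℝ) := by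
      intro q
      have := Finset.max'_mem (insert (0:ℝ)
        (Finset.image (fun i : Fin (n+1) => t (i:ℕ) - ((q i : ℕ) : ℝ)) Finset.univ))
        ⟨0, Finset.mem_insert_self _ _⟩
      rcases Finset.mem_insert.1 this with h | h
      · exact Or.inl h
      · obtain ⟨i, _, hi⟩ := Finset.mem_image.1 h
        exact Or.inr ⟨i, hi.symm⟩
    have hΘlt : ∀ q ∈ G, ∀ i : Fin (n+1), Θ q < t (i:ℕ) - ((q i : ℕ) : ℝ) + 1 := by
      intro q hq i
      have hmem : a.1 ∈ O q := (Finset.mem_filter.1 hq).2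
      rcases hΘmem q with h | ⟨i', h⟩
      · rw [h]
        have := hmem.2.1 i
        linarith
      · rw [h]
        exact hmem.2.2 i' i
    have hΘ1 : ∀ q ∈ G, Θ q < 1 := by
      intro q hq
      have hmem : a.1 ∈ O q := (Finset.mem_filter.1 hq).2
      rcases hΘmem q with h | ⟨i', h⟩
      · rw [h]; norm_num
      · rw [h]; exact hmem.1 i'
    have hceil : ∀ q ∈ G, ∀ i : Fin (n+1),
        ⌈t (i:ℕ) - Θ q⌉ = ((q i : ℕ) : ℤ) := by
      intro q hq i
      rw [Int.ceil_eq_iff]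
      have h1 := hΘi q i
      have h2 := hΘlt q hq i
      constructor
      · push_cast
        linarith
      · push_cast
        linarith
    -- injectivity
    have hinj : Set.InjOn Θ ↑G := by
      intro q hq q' hq' heq
      funext i
      have h1 := hceil q hq i
      have h2 := hceil q' hq' i
      rw [heq] at h1
      rw [h1] at h2
      have : (q i : ℕ) = (q' i : ℕ) := by exact_mod_cast h2
      exact Fin.ext this
    -- maps to T
    have hmapsto : ∀ q ∈ G, Θ q ∈ T := by
      intro q hq
      rcases hΘmem q with h | ⟨i', h⟩
      · rw [h, hT]
        refine Finset.mem_image.2 ⟨0, Finset.mem_univ _, ?_⟩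
        show Int.fract (t ((0 : Fin (n+1)) : ℕ)) = 0
        have : t ((0 : Fin (n+1)) : ℕ) = 0 := tf_zero e N a.1
        rw [this, Int.fract_zero]
      · have hfloor : ⌊t (i':ℕ)⌋ = ((q i' : ℕ) : ℤ) := by
          rw [Int.floor_eq_iff]
          have h1 : 0 ≤ Θ q := hΘ0 q
          have h2 : Θ q < 1 := hΘ1 q hq
          rw [h] at h1 h2
          constructor
          · push_cast; linarith
          · push_cast; linarith
        rw [hT]
        refine Finset.mem_image.2 ⟨i', Finset.mem_univ _, ?_⟩
        rw [Int.fract, hfloor, h]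
        push_cast
        ring
    have hGT : G.card ≤ T.card := Finset.card_le_card_of_injOn Θ hmapsto hinj
    -- now bound T.card
    set Vals := Finset.image (fun i : Fin (n+1) => t (i:ℕ)) Finset.univ with hVals
    have hTV : T = Vals.image Int.fract := by
      rw [hT, hVals, Finset.image_image]
      rfl
    have h0V : (0:ℝ) ∈ Vals := by
      refine Finset.mem_image.2 ⟨0, Finset.mem_univ _, ?_⟩
      exact tf_zero e N a.1
    have hNV : ((N:ℕ) : ℝ) ∈ Vals := by
      refine Finset.mem_image.2 ⟨Fin.last n, Finset.mem_univ _, ?_⟩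
      show t n = _
      exact tf_top e N a.1 a.2.2.1
    have hTVcard : T.card < Vals.card := by
      rw [hTV]
      refine card_image_lt hNV h0V ?_ ?_
      · intro h
        have : (N:ℝ) ≠ 0 := ne_of_gt hNpos
        exact this h
      · rw [Int.fract_natCast, Int.fract_zero]
    -- Vals.card ≤ supp.card + 1
    set Filt := Finset.univ.filter
      (fun i : Fin n => t ((i:ℕ)+1) ≠ t (i:ℕ)) with hFilt
    have hclaim : ∀ m : ℕ, m ≤ n → t m ∈
        insert (0:ℝ) (Filt.image (fun i : Fin n => t ((i:ℕ)+1))) := by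
      intro m
      induction m with
      | zero =>
        intro _
        have : t 0 = 0 := tf_zero e N a.1
        rw [this]
        exact Finset.mem_insert_self _ _
      | succ m ih =>
        intro hm
        by_cases heq : t (m+1) = t m
        · rw [heq]
          exact ih (by omega)
        · refine Finset.mem_insert_of_mem (Finset.mem_image.2 ⟨⟨m, by omega⟩, ?_, rfl⟩)
          rw [hFilt]
          exact Finset.mem_filter.2 ⟨Finset.mem_univ _, heq⟩
    have hsubVals : Vals ⊆ insert (0:ℝ)
        (Filt.image (fun i : Fin n => t ((i:ℕ)+1))) := by
      intro x hx
      obtain ⟨i, _, rfl⟩ := Finset.mem_image.1 hx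
      exact hclaim (i:ℕ) (by omega)
    have hValscard : Vals.card ≤ Filt.card + 1 := by
      calc Vals.card ≤ (insert (0:ℝ)
          (Filt.image (fun i : Fin n => t ((i:ℕ)+1)))).card :=
            Finset.card_le_card hsubVals
      _ ≤ (Filt.image (fun i : Fin n => t ((i:ℕ)+1))).card + 1 :=
            Finset.card_insert_le _ _
      _ ≤ Filt.card + 1 := by
            exact Nat.add_le_add_right Finset.card_image_le 1
    have hFiltcard : Filt.card ≤ (K.supp a.1).card := by
      apply Finset.card_le_card_of_injOn (fun i : Fin n => e.symm i)
      · intro i hi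
        have hne : t ((i:ℕ)+1) ≠ t (i:ℕ) := (Finset.mem_filter.1 hi).2
        have hstep := tf_step e N a.1 i.is_lt
        simp only [Fin.eta] at hstep
        unfold FinSC.supp
        refine Finset.mem_filter.2 ⟨Finset.mem_univ _, ?_⟩
        intro h0
        apply hne
        show tf e N a.1 ((i:ℕ)+1) = tf e N a.1 (i:ℕ)
        rw [hstep, h0, mul_zero, add_zero]
      · intro i _ i' _ h
        exact e.symm.injective h
    have hfinal : G.card ≤ (K.supp a.1).card := by omega
    rw [hG] at hfinal
    convert hfinal using 3

lemma mem_supp_iff (K : FinSC) (w : K.V → ℝ) (v : K.V) : v ∈ K.supp w ↔ w v ≠ 0 := by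
  unfold FinSC.supp
  simp

lemma locDim_witness (K : FinSC) (a : K.Sp) :
    ∃ S, S ∈ K.faces ∧ K.supp a.1 ⊆ S ∧ K.locDim a = S.card - 1 := by
  unfold FinSC.locDim
  have hne : (K.faces.filter (fun S => K.supp a.1 ⊆ S)).Nonempty :=
    ⟨K.supp a.1, Finset.mem_filter.2 ⟨supp_mem_faces K a, subset_rfl⟩⟩
  obtain ⟨S, hS, hsup⟩ := Finset.exists_mem_eq_sup _ hne Finset.card
  exact ⟨S, (Finset.mem_filter.1 hS).1, (Finset.mem_filter.1 hS).2, by rw [hsup]⟩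

/-- Uniform version of the `ε`-embedding property on a compact space. -/
lemma unif_lemma {X : Type*} [MetricSpace X] [CompactSpace X] [Nonempty X]
    {Y : Type*} [MetricSpace Y] (F : X → Y) (hF : Continuous F) (ε : ℝ)
    (hε : 0 < ε) (hfib : ∀ x x' : X, F x = F x' → dist x x' < ε) :
    ∃ δ c : ℝ, 0 < δ ∧ 0 ≤ c ∧ c < ε ∧
      ∀ x x' : X, dist (F x) (F x') ≤ δ → dist x x' ≤ c := by
  have step1 : ∃ δ : ℝ, 0 < δ ∧ ∀ x x' : X, dist (F x) (F x') ≤ δ → dist x x' < ε := by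
    set D : Set (X × X) := {p | ε ≤ dist p.1 p.2} with hD
    have hDclosed : IsClosed D :=
      isClosed_le continuous_const (continuous_fst.dist continuous_snd)
    by_cases hDne : D.Nonempty
    · obtain ⟨p₀, hp₀, hmin⟩ := (hDclosed.isCompact).exists_isMinOn hDne
        ((hF.comp continuous_fst).dist (hF.comp continuous_snd)).continuousOn
      have hp₀pos : 0 < dist (F p₀.1) (F p₀.2) := by
        rcases (dist_nonneg : (0:ℝ) ≤ dist (F p₀.1) (F p₀.2)).lt_or_eq with h | h
        · exact h
        · exfalso
          have : F p₀.1 = F p₀.2 := dist_eq_zero.1 h.symm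
          have := hfib _ _ this
          have hp₀' : ε ≤ dist p₀.1 p₀.2 := hp₀
          linarith
      refine ⟨dist (F p₀.1) (F p₀.2) / 2, by linarith, ?_⟩
      intro x x' h
      by_contra hcon
      push_neg at hcon
      have hmem : (x, x') ∈ D := hcon
      have := isMinOn_iff.1 hmin (x, x') hmem
      simp only [Function.comp_apply] at this
      linarith
    · refine ⟨1, one_pos, fun x x' _ => ?_⟩
      by_contra hcon
      push_neg at hcon
      exact hDne ⟨(x, x'), hcon⟩
  obtain ⟨δ, hδ, himp⟩ := step1
  set D2 : Set (X × X) := {p | dist (F p.1) (F p.2) ≤ δ} with hD2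
  have hD2closed : IsClosed D2 :=
    isClosed_le ((hF.comp continuous_fst).dist (hF.comp continuous_snd)) continuous_const
  have hD2ne : D2.Nonempty := by
    refine ⟨(Classical.arbitrary X, Classical.arbitrary X), ?_⟩
    show dist (F _) (F _) ≤ δ
    rw [dist_self]
    exact hδ.le
  obtain ⟨p₁, hp₁, hmax⟩ := (hD2closed.isCompact).exists_isMaxOn hD2ne
    (continuous_fst.dist continuous_snd).continuousOn
  exact ⟨δ, dist p₁.1 p₁.2, hδ, dist_nonneg, himp _ _ hp₁,
    fun x x' h => isMaxOn_iff.1 hmax (x, x') h⟩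

/-- The main construction: from an `ε`-embedding into `K`, construct an `ε`-embedding
into the nerve of a fine cover whose big local dimension is controlled by the small
local dimension of the original map, up to `varOsc`. -/
lemma main2 {X : Type*} [MetricSpace X] [CompactSpace X] [Nonempty X]
    (φ : X → ℝ) (ε : ℝ) (hε : 0 < ε)
    (Mφ : ℝ) (hMφ : ∀ x, φ x ≤ Mφ)
    (hvarle : ∀ x y : X, dist x y ≤ ε → |φ x - φ y| ≤ varOsc φ ε)
    (K : FinSC) (f : X → K.Sp) (hf : Continuous f)
    (hfib : ∀ y : K.Sp, Metric.diam (f ⁻¹' {y}) < ε) :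
    ∃ (K' : FinSC) (g : X → K'.Sp), Continuous g ∧
      (∀ y : K'.Sp, Metric.diam (g ⁻¹' {y}) < ε) ∧
      (⨆ x : X, ((K'.locDim (g x) : ℝ) + φ x))
        ≤ (⨆ x : X, ((K.slocDim (f x) : ℝ) + φ x)) + varOsc φ ε := by
  have hV : Nonempty K.V := by
    obtain ⟨v, -⟩ := supp_nonempty K (f (Classical.arbitrary X))
    exact ⟨v⟩
  set F : X → (K.V → ℝ) := fun x => (f x).1 with hFdef
  have hF : Continuous F := continuous_subtype_val.comp hf
  have hfib' : ∀ x x' : X, F x = F x' → dist x x' < ε := by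
    intro x x' h
    have hxx : f x = f x' := Subtype.ext h
    have hx' : x' ∈ f ⁻¹' {f x} := by simp [hxx]
    have hx : x ∈ f ⁻¹' {f x} := by simp
    exact lt_of_le_of_lt
      (Metric.dist_le_diam_of_mem
        ((isCompact_univ.isBounded).subset (Set.subset_univ _)) hx hx') (hfib (f x))
  obtain ⟨δ, c, hδpos, hc0, hcε, himp⟩ := unif_lemma F hF ε hε hfib'
  obtain ⟨n, N, O, hOopen, hOcne, hOdiam, hOcov, hOord⟩ := cover K hV δ hδpos
  set u : (Fin (n+1) → Fin (N+1)) → X → ℝ :=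
    fun j x => Metric.infDist (F x) ((O j)ᶜ) with hu
  have hucont : ∀ j, Continuous (u j) := fun j => (Metric.continuous_infDist_pt _).comp hF
  have hunonneg : ∀ j x, 0 ≤ u j x := fun j x => Metric.infDist_nonneg
  have hupos : ∀ j x, 0 < u j x ↔ F x ∈ O j := by
    intro j x
    constructor
    · intro h
      by_contra hmem
      have hmem' : F x ∈ (O j)ᶜ := hmem
      have h0 : u j x = 0 := Metric.infDist_zero_of_mem hmem'
      rw [h0] at h
      exact lt_irrefl _ h
    · intro h
      exact ((hOopen j).isClosed_compl.notMem_iff_infDist_pos (hOcne j)).1 (by simpa using h)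
  set Dd : X → ℝ := fun x => ∑ j, u j x with hDd
  have hDdpos : ∀ x, 0 < Dd x := by
    intro x
    obtain ⟨j, hj⟩ := hOcov (f x)
    exact Finset.sum_pos' (fun j _ => hunonneg j x)
      ⟨j, Finset.mem_univ j, (hupos j x).2 hj⟩
  have hDdcont : Continuous Dd := continuous_finset_sum _ (fun j _ => hucont j)
  have hcoordpos : ∀ (x : X) (j : Fin (n+1) → Fin (N+1)),
      (u j x / Dd x) ≠ 0 → F x ∈ O j := by
    intro x j hne
    apply (hupos j x).1
    rcases (hunonneg j x).lt_or_eq with h | h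
    · exact h
    · exact absurd (by rw [← h, zero_div]) hne
  -- the nerve complex
  set Kn : FinSC :=
    { V := Fin (n+1) → Fin (N+1)
      faces := Finset.univ.filter
        (fun S : Finset (Fin (n+1) → Fin (N+1)) =>
          S.Nonempty ∧ ∃ x : X, ∀ j ∈ S, F x ∈ O j)
      nonempty_mem := fun S hS => (Finset.mem_filter.1 hS).2.1
      down_closed := by
        intro S hS G hGS hGne
        obtain ⟨x, hx⟩ := (Finset.mem_filter.1 hS).2.2
        exact Finset.mem_filter.2
          ⟨Finset.mem_univ _, hGne, x, fun j hj => hx j (hGS hj)⟩ } with hKn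
  have hKnfaces : Kn.faces = Finset.univ.filter
      (fun S : Finset (Fin (n+1) → Fin (N+1)) =>
        S.Nonempty ∧ ∃ x : X, ∀ j ∈ S, F x ∈ O j) := rfl
  have hw : ∀ x : X, Kn.IsPoint (fun j => u j x / Dd x) := by
    intro x
    have hDx := hDdpos x
    refine ⟨fun j => div_nonneg (hunonneg j x) hDx.le, ?_, ?_⟩
    · rw [← Finset.sum_div]
      exact div_self (ne_of_gt hDx)
    · rw [hKnfaces]
      refine Finset.mem_filter.2 ⟨Finset.mem_univ _, ?_, x, ?_⟩
      · obtain ⟨j, hj⟩ := hOcov (f x)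
        refine ⟨j, (mem_supp_iff Kn _ j).2 ?_⟩
        exact ne_of_gt (div_pos ((hupos j x).2 hj) hDx)
      · intro j hj
        exact hcoordpos x j ((mem_supp_iff Kn _ j).1 hj)
  set g : X → Kn.Sp := fun x => ⟨fun j => u j x / Dd x, hw x⟩ with hg
  have hgcont : Continuous g := by
    apply Continuous.subtype_mk
    exact continuous_pi (fun j => (hucont j).div hDdcont (fun x => ne_of_gt (hDdpos x)))
  have hgfib : ∀ y : Kn.Sp, Metric.diam (g ⁻¹' {y}) < ε := by
    intro y
    rcases Set.eq_empty_or_nonempty (g ⁻¹' {y}) with h | h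
    · rw [h, Metric.diam_empty]; exact hε
    · apply lt_of_le_of_lt _ hcε
      apply Metric.diam_le_of_forall_dist_le hc0
      intro x hx x' hx'
      have hgx : g x = y := hx
      have hgx' : g x' = y := hx'
      obtain ⟨j, hj⟩ := supp_nonempty Kn y
      have hyj : y.1 j ≠ 0 := (mem_supp_iff Kn _ j).1 hj
      have h1 : F x ∈ O j := by
        apply hcoordpos x j
        have : (g x).1 j = y.1 j := by rw [hgx]
        rw [← this] at hyj
        exact hyj
      have h2 : F x' ∈ O j := by
        apply hcoordpos x' j
        have : (g x').1 j = y.1 j := by rw [hgx']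
        rw [← this] at hyj
        exact hyj
      exact himp x x' (hOdiam j (f x) (f x') h1 h2)
  -- the dimension bound
  have hbdd' : BddAbove (Set.range (fun x : X => ((K.slocDim (f x) : ℝ) + φ x))) := by
    refine ⟨(Fintype.card K.V : ℝ) + Mφ, ?_⟩
    rintro r ⟨x, rfl⟩
    exact add_le_add (by exact_mod_cast sloc_le_card K (f x)) (hMφ x)
  have hkey : ∀ x : X, ((Kn.locDim (g x) : ℝ) + φ x)
      ≤ (⨆ x : X, ((K.slocDim (f x) : ℝ) + φ x)) + varOsc φ ε := by
    intro x
    obtain ⟨S, hSfaces, hSsupp, hlocg⟩ := locDim_witness Kn (g x)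
    have hSfaces' := hSfaces
    rw [hKnfaces] at hSfaces'
    obtain ⟨x', hx'⟩ := (Finset.mem_filter.1 hSfaces').2.2
    obtain ⟨j₀, hj₀⟩ := supp_nonempty Kn (g x)
    have hxj₀ : F x ∈ O j₀ := hcoordpos x j₀ ((mem_supp_iff Kn _ j₀).1 hj₀)
    have hx'j₀ : F x' ∈ O j₀ := hx' j₀ (hSsupp hj₀)
    have hdxx' : dist x x' ≤ ε :=
      le_trans (himp x x' (hOdiam j₀ (f x) (f x') hxj₀ hx'j₀)) hcε.le
    have hcardS : S.card ≤ (K.supp (f x').1).card := by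
      apply le_trans _ (hOord (f x'))
      apply Finset.card_le_card
      intro j hj
      exact Finset.mem_filter.2 ⟨Finset.mem_univ _, hx' j hj⟩
    have hnat : Kn.locDim (g x) ≤ K.slocDim (f x') := by
      rw [hlocg]
      exact Nat.sub_le_sub_right hcardS 1
    have hcast : (Kn.locDim (g x) : ℝ) ≤ (K.slocDim (f x') : ℝ) := by exact_mod_cast hnat
    have habs : φ x - φ x' ≤ varOsc φ ε :=
      le_trans (le_abs_self _) (hvarle x x' hdxx')
    have hub : ((K.slocDim (f x') : ℝ) + φ x')
        ≤ ⨆ x : X, ((K.slocDim (f x) : ℝ) + φ x) := le_ciSup hbdd' x'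
    linarith
  exact ⟨Kn, g, hgcont, hgfib, ciSup_le hkey⟩

end WidimAux

open WidimAux

/-- `Widim'_ε(X,d,φ) ≤ Widim_ε(X,d,φ) ≤ Widim'_ε(X,d,φ) + var_ε(φ,d)`. -/
theorem stmt_14 {X : Type*} [MetricSpace X] [CompactSpace X] [Nonempty X]
    (φ : X → ℝ) (hφ : Continuous φ) (ε : ℝ) (hε : 0 < ε) :
    widim' φ ε ≤ widim φ ε ∧ widim φ ε ≤ widim' φ ε + varOsc φ ε := by
  obtain ⟨xM, -, hxM⟩ := isCompact_univ.exists_isMaxOn Set.univ_nonempty hφ.continuousOn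
  obtain ⟨xm, -, hxm⟩ := isCompact_univ.exists_isMinOn Set.univ_nonempty hφ.continuousOn
  have hMφ : ∀ x, φ x ≤ φ xM := fun x => isMaxOn_iff.1 hxM x (Set.mem_univ x)
  have hmφ : ∀ x, φ xm ≤ φ x := fun x => isMinOn_iff.1 hxm x (Set.mem_univ x)
  -- varOsc facts
  have hvbdd : BddAbove {r : ℝ | ∃ x y : X, dist x y ≤ ε ∧ r = |φ x - φ y|} := by
    refine ⟨φ xM - φ xm, ?_⟩
    rintro r ⟨x, y, -, rfl⟩
    exact abs_le.2 ⟨by linarith [hMφ y, hmφ x], by linarith [hMφ x, hmφ y]⟩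
  have hvmem0 : (0:ℝ) ∈ {r : ℝ | ∃ x y : X, dist x y ≤ ε ∧ r = |φ x - φ y|} := by
    refine ⟨Classical.arbitrary X, Classical.arbitrary X, by simpa using hε.le, by simp⟩
  have hvar0 : 0 ≤ varOsc φ ε := le_csSup hvbdd hvmem0
  have hvarle : ∀ x y : X, dist x y ≤ ε → |φ x - φ y| ≤ varOsc φ ε :=
    fun x y h => le_csSup hvbdd ⟨x, y, h, rfl⟩
  -- the two sets
  set A : Set ℝ := {r : ℝ | ∃ (K : FinSC) (f : X → K.Sp), Continuous f ∧
    (∀ y : K.Sp, Metric.diam (f ⁻¹' {y}) < ε) ∧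
    r = ⨆ x : X, ((K.locDim (f x) : ℝ) + φ x)} with hA
  set B : Set ℝ := {r : ℝ | ∃ (K : FinSC) (f : X → K.Sp), Continuous f ∧
    (∀ y : K.Sp, Metric.diam (f ⁻¹' {y}) < ε) ∧
    r = ⨆ x : X, ((K.slocDim (f x) : ℝ) + φ x)} with hB
  have hwidim : widim φ ε = sInf A := rfl
  have hwidim' : widim' φ ε = sInf B := rfl
  have hbddA : ∀ (K : FinSC) (f : X → K.Sp),
      BddAbove (Set.range fun x => ((K.locDim (f x) : ℝ) + φ x)) := by
    intro K f
    refine ⟨(Fintype.card K.V : ℝ) + φ xM, ?_⟩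
    rintro r ⟨x, rfl⟩
    exact add_le_add (by exact_mod_cast loc_le_card K (f x)) (hMφ x)
  have hbddB : ∀ (K : FinSC) (f : X → K.Sp),
      BddAbove (Set.range fun x => ((K.slocDim (f x) : ℝ) + φ x)) := by
    intro K f
    refine ⟨(Fintype.card K.V : ℝ) + φ xM, ?_⟩
    rintro r ⟨x, rfl⟩
    exact add_le_add (by exact_mod_cast sloc_le_card K (f x)) (hMφ x)
  have hbbA : BddBelow A := by
    refine ⟨φ xm, ?_⟩
    rintro r ⟨K, f, -, -, rfl⟩
    calc φ xm ≤ (K.locDim (f xm) : ℝ) + φ xm :=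
          le_add_of_nonneg_left (Nat.cast_nonneg _)
    _ ≤ _ := le_ciSup (hbddA K f) xm
  have hbbB : BddBelow B := by
    refine ⟨φ xm, ?_⟩
    rintro r ⟨K, f, -, -, rfl⟩
    calc φ xm ≤ (K.slocDim (f xm) : ℝ) + φ xm :=
          le_add_of_nonneg_left (Nat.cast_nonneg _)
    _ ≤ _ := le_ciSup (hbddB K f) xm
  have hABne : B.Nonempty → A.Nonempty := by
    rintro ⟨r, K, f, hc, hd, -⟩
    exact ⟨_, K, f, hc, hd, rfl⟩
  have hBAne : A.Nonempty → B.Nonempty := by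
    rintro ⟨r, K, f, hc, hd, -⟩
    exact ⟨_, K, f, hc, hd, rfl⟩
  constructor
  · by_cases hAne : A.Nonempty
    · rw [hwidim, hwidim']
      apply le_csInf hAne
      rintro r ⟨K, f, hc, hd, rfl⟩
      calc sInf B ≤ ⨆ x : X, ((K.slocDim (f x) : ℝ) + φ x) :=
            csInf_le hbbB ⟨K, f, hc, hd, rfl⟩
      _ ≤ ⨆ x : X, ((K.locDim (f x) : ℝ) + φ x) :=
            ciSup_mono (hbddA K f)
              (fun x => add_le_add_left (by exact_mod_cast sloc_le_loc K (f x)) _)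
    · have hBne : ¬ B.Nonempty := fun h => hAne (hABne h)
      rw [hwidim, hwidim', Set.not_nonempty_iff_eq_empty.1 hAne,
        Set.not_nonempty_iff_eq_empty.1 hBne, Real.sInf_empty]
  · by_cases hBne : B.Nonempty
    · rw [hwidim, hwidim']
      have key : ∀ r ∈ B, sInf A ≤ r + varOsc φ ε := by
        rintro r ⟨K, f, hc, hd, rfl⟩
        obtain ⟨K', g, hgc, hgd, hle⟩ := main2 φ ε hε (φ xM) hMφ hvarle K f hc hd
        calc sInf A ≤ ⨆ x : X, ((K'.locDim (g x) : ℝ) + φ x) :=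
              csInf_le hbbA ⟨K', g, hgc, hgd, rfl⟩
        _ ≤ _ := hle
      have h2 : sInf A - varOsc φ ε ≤ sInf B :=
        le_csInf hBne (fun r hr => by linarith [key r hr])
      linarith
    · have hAne : ¬ A.Nonempty := fun h => hBne (hBAne h)
      rw [hwidim, hwidim', Set.not_nonempty_iff_eq_empty.1 hAne,
        Set.not_nonempty_iff_eq_empty.1 hBne, Real.sInf_empty]
      simpa using hvar0
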